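/- The failure probability bound for the degree parameter: under the random construction with t sets, P(there exists a p-subset S of E with |χ(S)| ≥ 6·t·(p/(ck))^p) ≤ binom(n,p)·n^{−k−1} ≤ 1/n. -/

import Mathlib

open MeasureTheory
open scoped ENNReal

theorem stmt19_pow_self_le_fact_exp (m : ℕ) :
    (m:ℝ)^m ≤ m.factorial * Real.exp m := by
  have h := Real.sum_le_exp_of_nonneg (x := (m:ℝ)) (by positivity) (m+1)
  have h2 : (m:ℝ)^m / m.factorial ≤ Real.exp m := by
    refine le_trans ?_ h
    exact Finset.single_le_sum (f := fun i => (m:ℝ)^i / i.factorial)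
      (fun i _ => by positivity) (Finset.self_mem_range_succ m)
  rw [div_le_iff₀ (by positivity)] at h2
  linarith

theorem stmt19_log_two_ge : (1:ℝ)/6 ≤ Real.log 2 := by
  rw [Real.le_log_iff_exp_le (by norm_num)]
  by_contra h
  push_neg at h
  have h6 : Real.exp ((1:ℝ)/6) ^ 6 = Real.exp 1 := by
    rw [← Real.exp_nat_mul]; norm_num
  have : (2:ℝ)^6 ≤ Real.exp ((1:ℝ)/6) ^ 6 := pow_le_pow_left₀ (by norm_num) h.le 6
  rw [h6] at this
  have := Real.exp_one_lt_d9
  norm_num at *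
  linarith

theorem stmt19_key_real (n k t m p : ℕ) (q : ℝ) (hq0 : 0 ≤ q) (hn2 : 2 ≤ n)
    (ha : ((k:ℝ)+1) * Real.log n ≤ (t:ℝ) * q^p)
    (hm : 6 * ((t:ℝ) * q^p) ≤ m) :
    (t.choose m : ℝ) * q^(p*m) ≤ ((n:ℝ)^(k+1))⁻¹ := by
  set a : ℝ := (t:ℝ) * q^p with ha_def
  have hqp : 0 ≤ q^p := by positivity
  have ha0 : 0 ≤ a := by positivity
  have hlogn : 0 < Real.log n := Real.log_pos (by exact_mod_cast hn2)
  have hk1 : (0:ℝ) < (k:ℝ)+1 := by positivity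
  have ha_pos : 0 < a := lt_of_lt_of_le (by positivity) ha
  have h1 : (t.choose m : ℝ) * q^(p*m) ≤ a^m / m.factorial := by
    rw [pow_mul, ha_def, mul_pow]
    calc (t.choose m : ℝ) * (q^p)^m ≤ ((t:ℝ)^m / m.factorial) * (q^p)^m :=
          mul_le_mul_of_nonneg_right (Nat.choose_le_pow_div m t) (pow_nonneg hqp m)
      _ = (t:ℝ)^m * (q^p)^m / m.factorial := by ring
  have h2 : a^m / m.factorial ≤ (Real.exp 1 / 6)^m := by
    rw [div_le_iff₀ (by positivity)]
    have h6a : (6*a)^m ≤ (m:ℝ)^m := pow_le_pow_left₀ (by positivity) hm m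
    have hfe : (m:ℝ)^m ≤ m.factorial * Real.exp m := stmt19_pow_self_le_fact_exp m
    have hexp : Real.exp (m:ℝ) = (Real.exp 1)^m := by
      rw [← Real.exp_nat_mul]; norm_num
    have : (6:ℝ)^m * a^m ≤ m.factorial * (Real.exp 1)^m := by
      calc (6:ℝ)^m * a^m = (6*a)^m := (mul_pow 6 a m).symm
        _ ≤ (m:ℝ)^m := h6a
        _ ≤ m.factorial * (Real.exp 1)^m := by rw [← hexp]; exact hfe
    have h6m : (0:ℝ) < 6^m := by positivity
    rw [div_pow, div_mul_eq_mul_div, le_div_iff₀ h6m]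
    linarith
  have h3 : (Real.exp 1 / 6)^m ≤ ((1:ℝ)/2)^m := by
    apply pow_le_pow_left₀ (by positivity)
    have := Real.exp_one_lt_d9
    linarith
  have h4 : ((1:ℝ)/2)^m ≤ ((n:ℝ)^(k+1))⁻¹ := by
    have hn0 : (0:ℝ) < n := by positivity
    have hle : (n:ℝ)^(k+1) ≤ 2^m := by
      have e1 : (n:ℝ)^(k+1) = Real.exp (((k:ℝ)+1) * Real.log n) := by
        rw [show ((k:ℝ)+1) = ((k+1:ℕ):ℝ) by push_cast; ring, Real.exp_nat_mul,
          Real.exp_log hn0]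
      have e2 : (2:ℝ)^m = Real.exp ((m:ℝ) * Real.log 2) := by
        rw [Real.exp_nat_mul, Real.exp_log (by norm_num : (0:ℝ) < 2)]
      rw [e1, e2, Real.exp_le_exp]
      have h16 : (1:ℝ)/6 ≤ Real.log 2 := stmt19_log_two_ge
      have hm6 : ((k:ℝ)+1) * Real.log n ≤ (m:ℝ)/6 := by linarith
      have : (m:ℝ)/6 ≤ (m:ℝ) * Real.log 2 := by
        rw [div_eq_mul_inv]
        have hm0 : (0:ℝ) ≤ m := by positivity
        nlinarith
      linarith
    calc ((1:ℝ)/2)^m = ((2:ℝ)^m)⁻¹ := by rw [div_pow, one_pow, one_div]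
      _ ≤ ((n:ℝ)^(k+1))⁻¹ := inv_anti₀ (by positivity) hle
  linarith

theorem stmt19_cylinder_meas {ι : Type*} [Fintype ι] [DecidableEq ι] {Ω : Type*}
    [MeasurableSpace Ω] (ν : Measure Ω) [IsProbabilityMeasure ν]
    (A : Set Ω) (T : Finset ι) :
    Measure.pi (fun _ : ι => ν) {F : ι → Ω | ∀ i ∈ T, F i ∈ A} = (ν A) ^ T.card := by
  have hset : {F : ι → Ω | ∀ i ∈ T, F i ∈ A} =
      Set.pi Set.univ (fun i => if i ∈ T then A else Set.univ) := by
    ext F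
    simp only [Set.mem_setOf_eq, Set.mem_pi, Set.mem_univ, forall_true_left]
    constructor
    · intro h i
      by_cases hi : i ∈ T <;> simp [hi, h i]
    · intro h i hi
      have := h i
      simpa [hi] using this
  rw [hset, Measure.pi_pi]
  calc ∏ i : ι, ν (if i ∈ T then A else Set.univ)
      = ∏ i : ι, (if i ∈ T then ν A else 1) := by
        apply Finset.prod_congr rfl
        intro i _
        by_cases hi : i ∈ T <;> simp [hi]
    _ = (ν A) ^ T.card := by
        rw [Finset.prod_ite_mem Finset.univ T (fun _ => ν A)]
        simp [Finset.prod_const, Finset.univ_inter]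

/-- Failure probability bound for the degree parameter: under the random construction
with `t` sets, the probability that some `p`-subset `S` satisfies
`|χ(S)| ≥ 6·t·(p/(ck))^p` is at most `C(n,p)·n^{-k-1}`, which is at most `1/n`. -/
theorem stmt19 {E : Type*} [Fintype E] [DecidableEq E] (n k p t : ℕ) (c : ℝ)
    (hn : Fintype.card E = n) (hn2 : 2 ≤ n)
    (hp : 1 ≤ p) (hpk : p ≤ k) (hc : 1 ≤ c) (hq : (p : ℝ) / (c * k) ≤ 1)
    (ht : ((c * k) ^ k / ((p : ℝ) ^ p * (c * k - p) ^ (k - p))) * (k + 1) * Real.log n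
      ≤ t) :
    Measure.pi (fun _ : Fin t => Measure.pi (fun _ : E =>
        (PMF.bernoulli (Real.toNNReal ((p : ℝ) / (c * k)))
          (Real.toNNReal_le_one.mpr hq)).toMeasure))
      {F : Fin t → E → Bool | ∃ S : Finset E, S.card = p ∧
        6 * ((t : ℝ) * ((p : ℝ) / (c * k)) ^ p)
          ≤ ((Finset.univ.filter (fun i : Fin t => ∀ x ∈ S, F i x = true)).card : ℝ)}
      ≤ ENNReal.ofReal ((n.choose p : ℝ) * ((n : ℝ) ^ (k + 1))⁻¹) ∧
    ENNReal.ofReal ((n.choose p : ℝ) * ((n : ℝ) ^ (k + 1))⁻¹)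
      ≤ ENNReal.ofReal (1 / n) := by
  -- setup
  set q : ℝ := (p : ℝ) / (c * k) with hq_def
  have hk1 : 1 ≤ k := le_trans hp hpk
  have hkR : (1:ℝ) ≤ (k:ℝ) := by exact_mod_cast hk1
  have hck : (0:ℝ) < c * k := by nlinarith
  have hp0 : (0:ℝ) < (p:ℝ) := by exact_mod_cast hp
  have hq0 : 0 ≤ q := by positivity
  have hpkR : (p:ℝ) ≤ (k:ℝ) := by exact_mod_cast hpk
  have hckp : (0:ℝ) ≤ c * k - p := by nlinarith
  have hlogn : 0 < Real.log n := Real.log_pos (by exact_mod_cast hn2)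
  -- `t·q^p ≥ (k+1)·log n`
  have ha : ((k:ℝ)+1) * Real.log n ≤ (t:ℝ) * q^p := by
    have hqp_pos : 0 < q^p := by positivity
    have hpow : (c*k)^k = (c*k)^p * (c*k)^(k-p) := by
      rw [← pow_add, Nat.add_sub_cancel' hpk]
    have hge : (c*k-(p:ℝ))^(k-p) ≤ (c*k)^(k-p) :=
      pow_le_pow_left₀ hckp (by linarith) _
    have hd : (0:ℝ) < (c*k-(p:ℝ))^(k-p) := by
      rcases eq_or_lt_of_le hpk with h | h
      · rw [h]; simp
      · have : (1:ℝ) ≤ c*k - p := by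
          have : ((p:ℝ)+1) ≤ (k:ℝ) := by exact_mod_cast h
          nlinarith
        positivity
    have h1R : (1:ℝ) ≤ ((c*k)^k / ((p:ℝ)^p * (c*k-p)^(k-p))) * q^p := by
      rw [hq_def, div_pow, div_mul_div_comm, le_div_iff₀ (by positivity)]
      calc (1:ℝ) * ((p:ℝ)^p * (c*k-(p:ℝ))^(k-p) * (c*k)^p)
          = (p:ℝ)^p * (c*k-(p:ℝ))^(k-p) * (c*k)^p := by ring
        _ ≤ (p:ℝ)^p * (c*k)^(k-p) * (c*k)^p := by gcongr
        _ = (c*k)^k * (p:ℝ)^p := by rw [hpow]; ring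
    have hmul : (((c*k)^k / ((p:ℝ)^p * (c*k-p)^(k-p))) * ((k:ℝ)+1) * Real.log n) * q^p
        ≤ (t:ℝ) * q^p := mul_le_mul_of_nonneg_right ht (le_of_lt hqp_pos)
    have hrw : (((c*k)^k / ((p:ℝ)^p * (c*k-p)^(k-p))) * ((k:ℝ)+1) * Real.log n) * q^p
        = (((c*k)^k / ((p:ℝ)^p * (c*k-p)^(k-p))) * q^p) * (((k:ℝ)+1) * Real.log n) := by
      ring
    have hL : (0:ℝ) < ((k:ℝ)+1) * Real.log n := by positivity
    have hfin : ((k:ℝ)+1) * Real.log n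
        ≤ (((c*k)^k / ((p:ℝ)^p * (c*k-p)^(k-p))) * q^p) * (((k:ℝ)+1) * Real.log n) :=
      le_mul_of_one_le_left (le_of_lt hL) h1R
    rw [hrw] at hmul
    calc ((k:ℝ)+1) * Real.log n ≤ _ := hfin
      _ ≤ (t:ℝ) * q^p := hmul
  set m : ℕ := ⌈6 * ((t:ℝ) * q^p)⌉₊ with hm_def
  have hm : 6 * ((t:ℝ) * q^p) ≤ m := Nat.le_ceil _
  have hkey : (t.choose m : ℝ) * q^(p*m) ≤ ((n:ℝ)^(k+1))⁻¹ :=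
    stmt19_key_real n k t m p q hq0 hn2 ha hm
  set μ' : ℝ≥0∞ := ENNReal.ofReal q with hμ'
  set bern := (PMF.bernoulli (Real.toNNReal q) (Real.toNNReal_le_one.mpr hq)).toMeasure with hbern
  set ν : Measure (E → Bool) := Measure.pi (fun _ : E => bern) with hν
  set P : Measure (Fin t → E → Bool) := Measure.pi (fun _ : Fin t => ν) with hP
  constructor
  · -- main bound
    -- per-subset event bound
    have hνA : ∀ S : Finset E, S.card = p →
        ν {g : E → Bool | ∀ x ∈ S, g x = true} = μ' ^ p := by
      intro S hS
      have : {g : E → Bool | ∀ x ∈ S, g x = true} =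
          {g : E → Bool | ∀ x ∈ S, g x ∈ ({true} : Set Bool)} := by
        simp [Set.mem_singleton_iff]
      rw [this, hν, stmt19_cylinder_meas bern ({true} : Set Bool) S, hS]
      congr 1
      rw [hbern, PMF.toMeasure_apply_singleton _ _ (measurableSet_singleton true)]
      rfl
    have hES : ∀ S : Finset E, S.card = p →
        P {F : Fin t → E → Bool |
            6 * ((t : ℝ) * q ^ p)
              ≤ ((Finset.univ.filter (fun i : Fin t => ∀ x ∈ S, F i x = true)).card : ℝ)}
          ≤ (t.choose m : ℝ≥0∞) * (μ' ^ p) ^ m := by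
      intro S hS
      set A : Set (E → Bool) := {g : E → Bool | ∀ x ∈ S, g x = true} with hA
      have hsub : {F : Fin t → E → Bool |
            6 * ((t : ℝ) * q ^ p)
              ≤ ((Finset.univ.filter (fun i : Fin t => ∀ x ∈ S, F i x = true)).card : ℝ)}
          ⊆ ⋃ T ∈ Finset.powersetCard m (Finset.univ : Finset (Fin t)),
              {F : Fin t → E → Bool | ∀ i ∈ T, F i ∈ A} := by
        intro F hF
        simp only [Set.mem_setOf_eq] at hF
        have hcard : m ≤ (Finset.univ.filter
            (fun i : Fin t => ∀ x ∈ S, F i x = true)).card := by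
          rw [hm_def]
          exact Nat.ceil_le.mpr hF
        obtain ⟨T, hTsub, hTcard⟩ := Finset.exists_subset_card_eq hcard
        refine Set.mem_iUnion₂.mpr ⟨T, Finset.mem_powersetCard_univ.mpr hTcard, ?_⟩
        · intro i hi
          have := hTsub hi
          rw [Finset.mem_filter] at this
          exact this.2
      calc P _ ≤ P (⋃ T ∈ Finset.powersetCard m (Finset.univ : Finset (Fin t)),
              {F : Fin t → E → Bool | ∀ i ∈ T, F i ∈ A}) := measure_mono hsub
        _ ≤ ∑ T ∈ Finset.powersetCard m (Finset.univ : Finset (Fin t)),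
              P {F : Fin t → E → Bool | ∀ i ∈ T, F i ∈ A} :=
            measure_biUnion_finset_le _ _
        _ = ∑ T ∈ Finset.powersetCard m (Finset.univ : Finset (Fin t)),
              (μ' ^ p) ^ m := by
            apply Finset.sum_congr rfl
            intro T hT
            rw [hP, stmt19_cylinder_meas ν A T,
              Finset.mem_powersetCard_univ.mp hT, hνA S hS]
        _ = (t.choose m : ℝ≥0∞) * (μ' ^ p) ^ m := by
            rw [Finset.sum_const, Finset.card_powersetCard, Finset.card_univ,
              Fintype.card_fin, nsmul_eq_mul]
    -- each per-subset bound is at most `ofReal ((n^(k+1))⁻¹)`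
    have hbound : (t.choose m : ℝ≥0∞) * (μ' ^ p) ^ m
        ≤ ENNReal.ofReal (((n:ℝ)^(k+1))⁻¹) := by
      have : (t.choose m : ℝ≥0∞) * (μ' ^ p) ^ m
          = ENNReal.ofReal ((t.choose m : ℝ) * q^(p*m)) := by
        rw [← pow_mul, hμ', ← ENNReal.ofReal_pow hq0,
          ENNReal.ofReal_mul (by positivity), ENNReal.ofReal_natCast]
      rw [this]
      exact ENNReal.ofReal_le_ofReal hkey
    -- union bound over subsets S
    have hsub2 : {F : Fin t → E → Bool | ∃ S : Finset E, S.card = p ∧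
          6 * ((t : ℝ) * q ^ p)
            ≤ ((Finset.univ.filter (fun i : Fin t => ∀ x ∈ S, F i x = true)).card : ℝ)}
        ⊆ ⋃ S ∈ Finset.powersetCard p (Finset.univ : Finset E),
            {F : Fin t → E → Bool |
              6 * ((t : ℝ) * q ^ p)
                ≤ ((Finset.univ.filter
                    (fun i : Fin t => ∀ x ∈ S, F i x = true)).card : ℝ)} := by
      intro F hF
      obtain ⟨S, hS, hle⟩ := hF
      exact Set.mem_iUnion₂.mpr ⟨S, Finset.mem_powersetCard_univ.mpr hS, hle⟩
    calc P {F : Fin t → E → Bool | ∃ S : Finset E, S.card = p ∧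
          6 * ((t : ℝ) * q ^ p)
            ≤ ((Finset.univ.filter (fun i : Fin t => ∀ x ∈ S, F i x = true)).card : ℝ)}
        ≤ P (⋃ S ∈ Finset.powersetCard p (Finset.univ : Finset E),
            {F : Fin t → E → Bool |
              6 * ((t : ℝ) * q ^ p)
                ≤ ((Finset.univ.filter
                    (fun i : Fin t => ∀ x ∈ S, F i x = true)).card : ℝ)}) :=
          measure_mono hsub2
      _ ≤ ∑ S ∈ Finset.powersetCard p (Finset.univ : Finset E),
            P {F : Fin t → E → Bool |
              6 * ((t : ℝ) * q ^ p)
                ≤ ((Finset.univ.filter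
                    (fun i : Fin t => ∀ x ∈ S, F i x = true)).card : ℝ)} :=
          measure_biUnion_finset_le _ _
      _ ≤ ∑ S ∈ Finset.powersetCard p (Finset.univ : Finset E),
            ENNReal.ofReal (((n:ℝ)^(k+1))⁻¹) := by
          apply Finset.sum_le_sum
          intro S hS
          exact le_trans (hES S (Finset.mem_powersetCard_univ.mp hS)) hbound
      _ = (n.choose p : ℝ≥0∞) * ENNReal.ofReal (((n:ℝ)^(k+1))⁻¹) := by
          rw [Finset.sum_const, Finset.card_powersetCard, Finset.card_univ, hn,
            nsmul_eq_mul]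
      _ = ENNReal.ofReal ((n.choose p : ℝ) * ((n : ℝ) ^ (k + 1))⁻¹) := by
          rw [ENNReal.ofReal_mul (by positivity), ENNReal.ofReal_natCast]
  · -- trivial comparison
    apply ENNReal.ofReal_le_ofReal
    have hn0 : (0:ℝ) < n := by positivity
    have hchoose : (n.choose p : ℝ) ≤ (n:ℝ)^k := by
      have h1 : n.choose p ≤ n^p := Nat.choose_le_pow n p
      have h2 : (n:ℝ)^p ≤ (n:ℝ)^k := by
        apply pow_le_pow_right₀ (by exact_mod_cast le_trans (by norm_num) hn2) hpk
      calc (n.choose p : ℝ) ≤ ((n^p : ℕ) : ℝ) := by exact_mod_cast h1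
        _ = (n:ℝ)^p := by push_cast; ring
        _ ≤ (n:ℝ)^k := h2
    rw [one_div]
    calc (n.choose p : ℝ) * ((n:ℝ)^(k+1))⁻¹ ≤ (n:ℝ)^k * ((n:ℝ)^(k+1))⁻¹ := by
          apply mul_le_mul_of_nonneg_right hchoose (by positivity)
      _ = (n:ℝ)⁻¹ := by
          rw [pow_succ]
          field_simp
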